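/- Let X, Y_1, Z_1, W_1 be finite random variables with Z_1 = Q_1(X) a deterministic function of X, W_1 ↔ X ↔ Y_1 a Markov chain, and Z_1 a deterministic function of (W_1, Y_1). Then I(X; W_1 | Y_1) ≥ H(Z_1 | Y_1). -/

import Mathlib

open scoped BigOperators

namespace SIScalable

variable {Ω : Type*} [Fintype Ω]

/-- Probability that a finite random variable `X` takes value `a`, under pmf `μ`. -/
noncomputable def pr (μ : Ω → ℝ) {A : Type*} [DecidableEq A] (X : Ω → A) (a : A) : ℝ :=
  ∑ ω, if X ω = a then μ ω else 0

/-- `μ` is a probability mass function. -/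
def IsPMF (μ : Ω → ℝ) : Prop := (∀ ω, 0 ≤ μ ω) ∧ ∑ ω, μ ω = 1

/-- Shannon entropy (in bits) of a finite random variable. -/
noncomputable def ent (μ : Ω → ℝ) {A : Type*} [Fintype A] [DecidableEq A] (X : Ω → A) : ℝ :=
  -∑ a : A, pr μ X a * Real.logb 2 (pr μ X a)

/-- Conditional Shannon entropy `H(X|Y)`. -/
noncomputable def condEnt (μ : Ω → ℝ) {A B : Type*} [Fintype A] [DecidableEq A]
    [Fintype B] [DecidableEq B] (X : Ω → A) (Y : Ω → B) : ℝ :=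
  ent μ (fun ω => (X ω, Y ω)) - ent μ Y

/-- Conditional mutual information `I(X;Y|Z)`. -/
noncomputable def cmi (μ : Ω → ℝ) {A B C : Type*} [Fintype A] [DecidableEq A]
    [Fintype B] [DecidableEq B] [Fintype C] [DecidableEq C]
    (X : Ω → A) (Y : Ω → B) (Z : Ω → C) : ℝ :=
  ent μ (fun ω => (X ω, Z ω)) + ent μ (fun ω => (Y ω, Z ω))
    - ent μ (fun ω => (X ω, Y ω, Z ω)) - ent μ Z


lemma pr_nonneg (μ : Ω → ℝ) (h0 : ∀ ω, 0 ≤ μ ω) {A : Type*} [DecidableEq A]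
    (V : Ω → A) (a : A) : 0 ≤ pr μ V a :=
  Finset.sum_nonneg fun ω _ => by by_cases h : V ω = a <;> simp [h, h0 ω]

lemma sum_pr (μ : Ω → ℝ) {A : Type*} [Fintype A] [DecidableEq A] (V : Ω → A) :
    ∑ a, pr μ V a = ∑ ω, μ ω := by
  unfold pr
  rw [Finset.sum_comm]
  exact Finset.sum_congr rfl fun ω _ => by simp [Finset.sum_ite_eq]

lemma pr_comp (μ : Ω → ℝ) {A B : Type*} [Fintype A] [DecidableEq A] [DecidableEq B]
    (V : Ω → A) (f : A → B) (b : B) :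
    pr μ (fun ω => f (V ω)) b = ∑ a, if f a = b then pr μ V a else 0 := by
  unfold pr
  have : ∀ a : A, (if f a = b then ∑ ω, if V ω = a then μ ω else 0 else 0)
      = ∑ ω, if V ω = a then (if f a = b then μ ω else 0) else 0 := by
    intro a; split <;> simp
  simp_rw [this]
  rw [Finset.sum_comm]
  refine Finset.sum_congr rfl fun ω _ => ?_
  simp [Finset.sum_ite_eq]

lemma ent_comp_of_injective (μ : Ω → ℝ) {A B : Type*} [Fintype A] [DecidableEq A]
    [Fintype B] [DecidableEq B] (V : Ω → A) (e : A → B) (he : Function.Injective e) :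
    ent μ (fun ω => e (V ω)) = ent μ V := by
  have hpr : ∀ a, pr μ (fun ω => e (V ω)) (e a) = pr μ V a := by
    intro a
    rw [pr_comp]
    simp [he.eq_iff, Finset.sum_ite_eq']
  have hzero : ∀ b, b ∉ Finset.univ.image e → pr μ (fun ω => e (V ω)) b = 0 := by
    intro b hb
    rw [pr_comp]
    refine Finset.sum_eq_zero fun a _ => ?_
    rw [if_neg]
    exact fun h => hb (Finset.mem_image.mpr ⟨a, Finset.mem_univ a, h⟩)
  unfold ent
  congr 1
  rw [← Finset.sum_subset (Finset.subset_univ (Finset.univ.image e))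
      (fun b _ hb => by rw [hzero b hb]; simp)]
  rw [Finset.sum_image (fun a _ a' _ h => he h)]
  exact Finset.sum_congr rfl fun a _ => by rw [hpr]

lemma pr_congr (μ : Ω → ℝ) (h0 : ∀ ω, 0 ≤ μ ω) {A : Type*} [DecidableEq A] {U V : Ω → A}
    (h : ∀ ω, 0 < μ ω → U ω = V ω) : pr μ U = pr μ V := by
  funext a
  unfold pr
  refine Finset.sum_congr rfl fun ω _ => ?_
  rcases (h0 ω).lt_or_eq with hp | hp
  · rw [h ω hp]
  · simp [← hp]

lemma ent_congr (μ : Ω → ℝ) (h0 : ∀ ω, 0 ≤ μ ω) {A : Type*} [Fintype A] [DecidableEq A]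
    {U V : Ω → A} (h : ∀ ω, 0 < μ ω → U ω = V ω) : ent μ U = ent μ V := by
  unfold ent
  rw [pr_congr μ h0 h]



lemma submod_aux {A B C : Type*} [Fintype A] [Fintype B] [Fintype C]
    (p : A → B → C → ℝ) (hp : ∀ a b c, 0 ≤ p a b c)
    (hsum : ∑ a, ∑ b, ∑ c, p a b c = 1) :
    (-∑ a, ∑ b, ∑ c, p a b c * Real.logb 2 (p a b c)) +
      (-∑ c, (∑ a, ∑ b, p a b c) * Real.logb 2 (∑ a, ∑ b, p a b c))
      ≤ (-∑ a, ∑ c, (∑ b, p a b c) * Real.logb 2 (∑ b, p a b c)) +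
        (-∑ b, ∑ c, (∑ a, p a b c) * Real.logb 2 (∑ a, p a b c)) := by
  have hlog2 : (0:ℝ) < Real.log 2 := Real.log_pos one_lt_two
  set L : ℝ → ℝ := Real.logb 2 with hL
  set qX : A → C → ℝ := fun a c => ∑ b, p a b c with hqX
  set qY : B → C → ℝ := fun b c => ∑ a, p a b c with hqY
  set q : C → ℝ := fun c => ∑ a, qX a c with hq
  have hqX0 : ∀ a c, 0 ≤ qX a c := fun a c => Finset.sum_nonneg fun b _ => hp a b c
  have hqY0 : ∀ b c, 0 ≤ qY b c := fun b c => Finset.sum_nonneg fun a _ => hp a b c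
  have hq0 : ∀ c, 0 ≤ q c := fun c => Finset.sum_nonneg fun a _ => hqX0 a c
  -- pointwise key inequality
  have key : ∀ a b c,
      p a b c * L (qX a c) + p a b c * L (qY b c)
        ≤ p a b c * L (p a b c) + p a b c * L (q c)
          + (qX a c * qY b c / q c - p a b c) / Real.log 2 := by
    intro a b c
    rcases (hp a b c).lt_or_eq with h | h
    · have hqXp : 0 < qX a c :=
        lt_of_lt_of_le h (Finset.single_le_sum (fun b' _ => hp a b' c) (Finset.mem_univ b))
      have hqYp : 0 < qY b c :=
        lt_of_lt_of_le h (Finset.single_le_sum (fun a' _ => hp a' b c) (Finset.mem_univ a))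
      have hqp : 0 < q c :=
        lt_of_lt_of_le hqXp (Finset.single_le_sum (fun a' _ => hqX0 a' c) (Finset.mem_univ a))
      set r : ℝ := qX a c * qY b c / (p a b c * q c) with hr
      have hrpos : 0 < r := div_pos (mul_pos hqXp hqYp) (mul_pos h hqp)
      have hlogr : Real.log r ≤ r - 1 := Real.log_le_sub_one_of_pos hrpos
      have e1 : L (qX a c) + L (qY b c) - L (p a b c) - L (q c) = Real.log r / Real.log 2 := by
        rw [hr, hL]
        simp only [Real.logb]
        rw [Real.log_div (mul_pos hqXp hqYp).ne' (mul_pos h hqp).ne',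
            Real.log_mul hqXp.ne' hqYp.ne', Real.log_mul h.ne' hqp.ne']
        ring
      have e3 : p a b c * r = qX a c * qY b c / q c := by
        rw [hr]; field_simp
      have e2 : p a b c * Real.log r ≤ p a b c * r - p a b c := by
        nlinarith [mul_le_mul_of_nonneg_left hlogr h.le]
      have e4 : p a b c * L (qX a c) + p a b c * L (qY b c)
            - p a b c * L (p a b c) - p a b c * L (q c)
          = p a b c * Real.log r / Real.log 2 := by
        rw [show p a b c * L (qX a c) + p a b c * L (qY b c)
              - p a b c * L (p a b c) - p a b c * L (q c)
            = p a b c * (L (qX a c) + L (qY b c) - L (p a b c) - L (q c)) by ring, e1]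
        ring
      have e5 : p a b c * Real.log r / Real.log 2
          ≤ (qX a c * qY b c / q c - p a b c) / Real.log 2 := by
        exact div_le_div_of_nonneg_right (by linarith [e2, e3]) hlog2.le
      linarith [e4, e5]
    · have h' : p a b c = 0 := h.symm
      simp only [h', zero_mul, sub_zero, add_zero, zero_add]
      exact div_nonneg (div_nonneg (mul_nonneg (hqX0 a c) (hqY0 b c)) (hq0 c)) hlog2.le
  have sum_key : ∑ a, ∑ b, ∑ c, (p a b c * L (qX a c) + p a b c * L (qY b c))
      ≤ ∑ a, ∑ b, ∑ c, (p a b c * L (p a b c) + p a b c * L (q c)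
          + (qX a c * qY b c / q c - p a b c) / Real.log 2) :=
    Finset.sum_le_sum fun a _ => Finset.sum_le_sum fun b _ =>
      Finset.sum_le_sum fun c _ => key a b c
  -- identities regrouping sums
  have I1 : ∑ a, ∑ c, qX a c * L (qX a c) = ∑ a, ∑ b, ∑ c, p a b c * L (qX a c) := by
    refine Finset.sum_congr rfl fun a _ => ?_
    conv_rhs => rw [Finset.sum_comm]
    exact Finset.sum_congr rfl fun c _ => Finset.sum_mul _ _ _
  have I2 : ∑ b, ∑ c, qY b c * L (qY b c) = ∑ a, ∑ b, ∑ c, p a b c * L (qY b c) := by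
    conv_rhs => rw [Finset.sum_comm]
    refine Finset.sum_congr rfl fun b _ => ?_
    conv_rhs => rw [Finset.sum_comm]
    exact Finset.sum_congr rfl fun c _ => Finset.sum_mul _ _ _
  have I3 : ∑ c, q c * L (q c) = ∑ a, ∑ b, ∑ c, p a b c * L (q c) := by
    have h1 : ∑ c, q c * L (q c) = ∑ c, ∑ a, ∑ b, p a b c * L (q c) :=
      Finset.sum_congr rfl fun c _ =>
        (Finset.sum_mul _ _ _).trans (Finset.sum_congr rfl fun a _ => Finset.sum_mul _ _ _)
    rw [h1, Finset.sum_comm]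
    exact Finset.sum_congr rfl fun a _ => Finset.sum_comm
  -- total masses
  have hq1 : ∑ c, q c = 1 := by
    calc ∑ c, q c = ∑ c, ∑ a, ∑ b, p a b c := rfl
      _ = ∑ a, ∑ c, ∑ b, p a b c := Finset.sum_comm
      _ = ∑ a, ∑ b, ∑ c, p a b c := Finset.sum_congr rfl fun a _ => Finset.sum_comm
      _ = 1 := hsum
  -- bound on the remainder sum
  have hT : ∑ a, ∑ b, ∑ c, qX a c * qY b c / q c ≤ 1 := by
    have h1 : ∑ a, ∑ b, ∑ c, qX a c * qY b c / q c
        = ∑ c, ∑ a, ∑ b, qX a c * qY b c / q c :=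
      (Finset.sum_congr rfl fun a _ => Finset.sum_comm).trans Finset.sum_comm
    rw [h1]
    have h2 : ∀ c, ∑ a, ∑ b, qX a c * qY b c / q c = q c * q c / q c := by
      intro c
      have hyy : ∑ b, qY b c = q c := Finset.sum_comm
      calc ∑ a, ∑ b, qX a c * qY b c / q c
          = ∑ a, (qX a c * ∑ b, qY b c) / q c :=
            Finset.sum_congr rfl fun a _ => by rw [← Finset.sum_div, ← Finset.mul_sum]
        _ = ((∑ a, qX a c) * ∑ b, qY b c) / q c := by rw [← Finset.sum_div, ← Finset.sum_mul]
        _ = q c * q c / q c := by rw [hyy]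
    have h3 : ∀ c, q c * q c / q c ≤ q c := by
      intro c
      rcases (hq0 c).lt_or_eq with h | h
      · rw [mul_div_assoc, div_self h.ne']; simp
      · rw [← h]; simp
    calc ∑ c, ∑ a, ∑ b, qX a c * qY b c / q c
        = ∑ c, q c * q c / q c := Finset.sum_congr rfl fun c _ => h2 c
      _ ≤ ∑ c, q c := Finset.sum_le_sum fun c _ => h3 c
      _ = 1 := hq1
  have hR : ∑ a, ∑ b, ∑ c, (qX a c * qY b c / q c - p a b c) / Real.log 2 ≤ 0 := by
    have e : ∑ a, ∑ b, ∑ c, (qX a c * qY b c / q c - p a b c) / Real.log 2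
        = (∑ a, ∑ b, ∑ c, qX a c * qY b c / q c) / Real.log 2
          - (∑ a, ∑ b, ∑ c, p a b c) / Real.log 2 := by
      simp only [sub_div, Finset.sum_sub_distrib, Finset.sum_div]
    rw [e, hsum]
    have h4 : (∑ a, ∑ b, ∑ c, qX a c * qY b c / q c) / Real.log 2 ≤ 1 / Real.log 2 :=
      div_le_div_of_nonneg_right hT hlog2.le
    linarith
  -- combine
  have split1 : ∑ a, ∑ b, ∑ c, (p a b c * L (qX a c) + p a b c * L (qY b c))
      = (∑ a, ∑ b, ∑ c, p a b c * L (qX a c)) + ∑ a, ∑ b, ∑ c, p a b c * L (qY b c) := by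
    simp only [Finset.sum_add_distrib]
  have split2 : ∑ a, ∑ b, ∑ c, (p a b c * L (p a b c) + p a b c * L (q c)
        + (qX a c * qY b c / q c - p a b c) / Real.log 2)
      = (∑ a, ∑ b, ∑ c, p a b c * L (p a b c)) + (∑ a, ∑ b, ∑ c, p a b c * L (q c))
        + ∑ a, ∑ b, ∑ c, (qX a c * qY b c / q c - p a b c) / Real.log 2 := by
    simp only [Finset.sum_add_distrib]
  rw [split1, split2] at sum_key
  linarith [sum_key, I1, I2, I3, hR]


lemma submod {A B C : Type*} [Fintype A] [DecidableEq A] [Fintype B] [DecidableEq B]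
    [Fintype C] [DecidableEq C]
    (μ : Ω → ℝ) (hμ : IsPMF μ) (X : Ω → A) (Y : Ω → B) (Z : Ω → C) :
    ent μ (fun ω => (X ω, Y ω, Z ω)) + ent μ Z
      ≤ ent μ (fun ω => (X ω, Z ω)) + ent μ (fun ω => (Y ω, Z ω)) := by
  have hXZ : ∀ (a : A) (c : C), pr μ (fun ω => (X ω, Z ω)) (a, c)
      = ∑ b, pr μ (fun ω => (X ω, Y ω, Z ω)) (a, b, c) := by
    intro a c
    unfold pr
    rw [Finset.sum_comm]
    refine Finset.sum_congr rfl fun ω _ => ?_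
    by_cases hx : X ω = a <;> by_cases hz : Z ω = c <;>
      simp [hx, hz, Prod.ext_iff, Finset.sum_ite_eq]
  have hYZ : ∀ (b : B) (c : C), pr μ (fun ω => (Y ω, Z ω)) (b, c)
      = ∑ a, pr μ (fun ω => (X ω, Y ω, Z ω)) (a, b, c) := by
    intro b c
    unfold pr
    rw [Finset.sum_comm]
    refine Finset.sum_congr rfl fun ω _ => ?_
    by_cases hy : Y ω = b <;> by_cases hz : Z ω = c <;>
      simp [hy, hz, Prod.ext_iff, Finset.sum_ite_eq]
  have hZ2 : ∀ c : C, pr μ Z c = ∑ b, pr μ (fun ω => (Y ω, Z ω)) (b, c) := by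
    intro c
    unfold pr
    rw [Finset.sum_comm]
    refine Finset.sum_congr rfl fun ω _ => ?_
    by_cases hz : Z ω = c <;> simp [hz, Prod.ext_iff, Finset.sum_ite_eq]
  have hZm : ∀ c : C, pr μ Z c = ∑ a, ∑ b, pr μ (fun ω => (X ω, Y ω, Z ω)) (a, b, c) := by
    intro c
    rw [hZ2 c, Finset.sum_congr rfl fun b _ => hYZ b c]
    exact Finset.sum_comm
  have hsum : ∑ a, ∑ b, ∑ c, pr μ (fun ω => (X ω, Y ω, Z ω)) (a, b, c) = 1 := by
    have h := sum_pr μ (fun ω => (X ω, Y ω, Z ω))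
    rw [hμ.2] at h
    simp only [Fintype.sum_prod_type] at h
    exact h
  have hnn : ∀ (a : A) (b : B) (c : C), 0 ≤ pr μ (fun ω => (X ω, Y ω, Z ω)) (a, b, c) :=
    fun a b c => pr_nonneg μ hμ.1 _ _
  unfold ent
  simp only [Fintype.sum_prod_type]
  simp_rw [hXZ, hYZ, hZm]
  exact submod_aux (fun a b c => pr μ (fun ω => (X ω, Y ω, Z ω)) (a, b, c)) hnn hsum


/-- With Z₁ = Q₁(X), W₁ ↔ X ↔ Y₁ Markov, and Z₁ = g(W₁,Y₁) a.s.,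
I(X;W₁|Y₁) ≥ H(Z₁|Y₁). -/
theorem first_stage_rate_lower_bound
    {Ω 𝒳 𝒴₁ 𝒲₁ 𝒵₁ : Type*} [Fintype Ω]
    [Fintype 𝒳] [DecidableEq 𝒳] [Fintype 𝒴₁] [DecidableEq 𝒴₁]
    [Fintype 𝒲₁] [DecidableEq 𝒲₁] [Fintype 𝒵₁] [DecidableEq 𝒵₁]
    (μ : Ω → ℝ) (hμ : IsPMF μ)
    (X : Ω → 𝒳) (Y₁ : Ω → 𝒴₁) (W₁ : Ω → 𝒲₁) (Q₁ : 𝒳 → 𝒵₁)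
    (hMarkov : ∀ (w₁ : 𝒲₁) (x : 𝒳) (y₁ : 𝒴₁),
      pr μ (fun ω => (W₁ ω, X ω, Y₁ ω)) (w₁, x, y₁) * pr μ X x
        = pr μ (fun ω => (W₁ ω, X ω)) (w₁, x)
          * pr μ (fun ω => (X ω, Y₁ ω)) (x, y₁))
    (g : 𝒲₁ × 𝒴₁ → 𝒵₁)
    (hg : ∀ ω, 0 < μ ω → Q₁ (X ω) = g (W₁ ω, Y₁ ω)) :
    condEnt μ (fun ω => Q₁ (X ω)) Y₁ ≤ cmi μ X W₁ Y₁ := by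
  classical
  have hsub := submod μ hμ X W₁ (fun ω => (Q₁ (X ω), Y₁ ω))
  have eA : ent μ (fun ω => (X ω, W₁ ω, (Q₁ (X ω), Y₁ ω)))
      = ent μ (fun ω => (X ω, W₁ ω, Y₁ ω)) :=
    ent_comp_of_injective μ (fun ω => (X ω, W₁ ω, Y₁ ω))
      (fun v : 𝒳 × 𝒲₁ × 𝒴₁ => (v.1, v.2.1, (Q₁ v.1, v.2.2)))
      (Function.LeftInverse.injective
        (g := fun r : 𝒳 × 𝒲₁ × 𝒵₁ × 𝒴₁ => (r.1, r.2.1, r.2.2.2)) fun v => rfl)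
  have eB : ent μ (fun ω => (X ω, (Q₁ (X ω), Y₁ ω)))
      = ent μ (fun ω => (X ω, Y₁ ω)) :=
    ent_comp_of_injective μ (fun ω => (X ω, Y₁ ω))
      (fun v : 𝒳 × 𝒴₁ => (v.1, (Q₁ v.1, v.2)))
      (Function.LeftInverse.injective
        (g := fun r : 𝒳 × 𝒵₁ × 𝒴₁ => (r.1, r.2.2)) fun v => rfl)
  have eC : ent μ (fun ω => (W₁ ω, (Q₁ (X ω), Y₁ ω)))
      = ent μ (fun ω => (W₁ ω, Y₁ ω)) := by
    have h1 : ent μ (fun ω => (W₁ ω, (Q₁ (X ω), Y₁ ω)))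
        = ent μ (fun ω => (W₁ ω, (g (W₁ ω, Y₁ ω), Y₁ ω))) :=
      ent_congr μ hμ.1 fun ω hω => by rw [hg ω hω]
    have h2 : ent μ (fun ω => (W₁ ω, (g (W₁ ω, Y₁ ω), Y₁ ω)))
        = ent μ (fun ω => (W₁ ω, Y₁ ω)) :=
      ent_comp_of_injective μ (fun ω => (W₁ ω, Y₁ ω))
        (fun v : 𝒲₁ × 𝒴₁ => (v.1, (g (v.1, v.2), v.2)))
        (Function.LeftInverse.injective
          (g := fun r : 𝒲₁ × 𝒵₁ × 𝒴₁ => (r.1, r.2.2)) fun v => rfl)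
    exact h1.trans h2
  simp only [condEnt, cmi]
  linarith [hsub, eA, eB, eC]

end SIScalable
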